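/- Let w(t) := ∂u(t; a, s)/∂a with a ≠ 0, where u(·;a,s) solves -(p u')' + q u = a m u, u(s)=0, u'(s)=1/p(s). Then w(s) = 0 and p(φ_a(s))·w(φ_a(s))·u'(φ_a(s)) = (1/a)∫_s^{φ_a(s)} p(t)u'(t)² dt + (1/a)∫_s^{φ_a(s)} q(t)u(t)² dt. In particular w(φ_a(s)) < 0 if a > 0 and w(φ_a(s)) > 0 if a < 0. -/

import Mathlib

open Set intervalIntegral

/-- Let `w(t) = ∂u(t;a,s)/∂a` with `a ≠ 0`, where `u α` solves
`-(p u')' + q u = α·m·u` with `u α s = 0`, `(u α)' s = 1/p s`. Writing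
`φ = φ_a(s)` for the first zero of `u a` after `s` (with `(u a)'(φ) < 0`), one has
`w s = 0`, the integral identity
`p(φ)·w(φ)·u'(φ) = (1/a)∫_s^φ p u'² + (1/a)∫_s^φ q u²`,
and in particular `w(φ) < 0` if `a > 0` and `w(φ) > 0` if `a < 0`. -/
theorem derivative_in_a_properties
    (p q m : ℝ → ℝ) (a s : ℝ) (u u' : ℝ → ℝ → ℝ) (w : ℝ → ℝ)
    (hp : Continuous p) (hq : Continuous q) (hm : Continuous m)
    (hppos : ∀ t, 0 < p t) (hqnn : ∀ t, 0 ≤ q t) (ha : a ≠ 0)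
    (hsol : ∀ α : ℝ, u α s = 0 ∧ u' α s = 1 / p s ∧
      ∀ t, HasDerivAt (u α) (u' α t) t ∧
        HasDerivAt (fun τ => p τ * u' α τ) (q t * u α t - α * m t * u α t) t)
    (hu : Continuous fun x : ℝ × ℝ => u x.1 x.2)
    (hu' : Continuous fun x : ℝ × ℝ => u' x.1 x.2)
    (hw : ∀ t, HasDerivAt (fun α => u α t) (w t) a)
    (hne : {t | s < t ∧ u a t = 0}.Nonempty)
    (hderφ : u' a (sInf {t | s < t ∧ u a t = 0}) < 0) :
    w s = 0 ∧
      (p (sInf {t | s < t ∧ u a t = 0}) * w (sInf {t | s < t ∧ u a t = 0}) *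
          u' a (sInf {t | s < t ∧ u a t = 0}) =
        (1 / a) * (∫ t in s..(sInf {t | s < t ∧ u a t = 0}), p t * (u' a t) ^ 2) +
        (1 / a) * (∫ t in s..(sInf {t | s < t ∧ u a t = 0}), q t * (u a t) ^ 2)) ∧
      (0 < a → w (sInf {t | s < t ∧ u a t = 0}) < 0) ∧
      (a < 0 → 0 < w (sInf {t | s < t ∧ u a t = 0})) := by
  obtain ⟨huas, hu'as, hODEa⟩ := hsol a
  set φ := sInf {t | s < t ∧ u a t = 0} with hφdef
  have hps : 0 < p s := hppos s
  have hcu : ∀ α : ℝ, Continuous fun t => u α t := fun α =>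
    hu.comp (continuous_const.prodMk continuous_id)
  have hcu' : ∀ α : ℝ, Continuous fun t => u' α t := fun α =>
    hu'.comp (continuous_const.prodMk continuous_id)
  -- w s = 0
  have hws : w s = 0 := by
    have h0 : (fun α : ℝ => u α s) = fun _ => (0 : ℝ) := funext fun α => (hsol α).1
    have hws' := hw s
    rw [h0] at hws'
    exact hws'.unique (hasDerivAt_const _ _)
  -- u a is nonzero just to the right of s
  have hslope : Filter.Tendsto (slope (u a) s) (nhdsWithin s {s}ᶜ) (nhds (u' a s)) :=
    hasDerivAt_iff_tendsto_slope.1 (hODEa s).1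
  have hpos' : 0 < u' a s := by rw [hu'as]; positivity
  have hev0 : ∀ᶠ t in nhdsWithin s {s}ᶜ, 0 < slope (u a) s t :=
    (tendsto_order.1 hslope).1 0 hpos'
  have hev : ∀ᶠ t in nhdsWithin s (Ioi s), u a t ≠ 0 := by
    have h1 : ∀ᶠ t in nhdsWithin s (Ioi s), 0 < slope (u a) s t :=
      hev0.filter_mono (nhdsWithin_mono s fun t ht => ht.ne')
    filter_upwards [h1, self_mem_nhdsWithin] with t hslt (hts : s < t)
    intro hzero
    rw [slope_def_field, hzero, huas] at hslt
    simp at hslt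
  obtain ⟨c, (hc : s < c), hIoo⟩ := mem_nhdsGT_iff_exists_Ioo_subset.1 hev
  have hlb : ∀ t ∈ {t | s < t ∧ u a t = 0}, c ≤ t := by
    intro t ⟨hst, hut⟩
    by_contra hlt
    exact hIoo ⟨hst, lt_of_not_ge hlt⟩ hut
  have hSeq : {t | s < t ∧ u a t = 0} = Ici c ∩ {t | u a t = 0} := by
    ext t
    constructor
    · intro ht; exact ⟨hlb t ht, ht.2⟩
    · rintro ⟨h1, h2⟩; exact ⟨lt_of_lt_of_le hc h1, h2⟩
  have hScl : IsClosed {t | s < t ∧ u a t = 0} := by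
    rw [hSeq]; exact isClosed_Ici.inter (isClosed_eq (hcu a) continuous_const)
  have hφS : φ ∈ {t | s < t ∧ u a t = 0} := hScl.csInf_mem hne ⟨c, hlb⟩
  have hsφ : s < φ := hφS.1
  have huφ : u a φ = 0 := hφS.2
  -- Wronskian identity
  have key : ∀ α : ℝ, p φ * u' a φ * u α φ = (α - a) * ∫ t in s..φ, m t * u α t * u a t := by
    intro α
    obtain ⟨hαs, hα's, hODEα⟩ := hsol α
    have hW : ∀ t : ℝ, HasDerivAt
        (fun τ => p τ * u' α τ * u a τ - p τ * u' a τ * u α τ)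
        ((a - α) * (m t * u α t * u a t)) t := by
      intro t
      have h1 := (((hODEα t).2.mul (hODEa t).1).sub ((hODEa t).2.mul (hODEα t).1))
      exact h1.congr_deriv (by ring)
    have hint : IntervalIntegrable (fun t => (a - α) * (m t * u α t * u a t)) MeasureTheory.volume s φ :=
      (continuous_const.mul ((hm.mul (hcu α)).mul (hcu a))).intervalIntegrable _ _
    have heq := intervalIntegral.integral_eq_sub_of_hasDerivAt (f' := fun t => (a - α) * (m t * u α t * u a t)) (fun t _ => hW t) hint
    rw [intervalIntegral.integral_const_mul, huφ, huas, hαs] at heq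
    linear_combination heq
  -- continuity of parametric integral
  have hH : Continuous fun α : ℝ => ∫ t in s..φ, m t * u α t * u a t := by
    apply intervalIntegral.continuous_parametric_intervalIntegral_of_continuous'
      (f := fun α t => m t * u α t * u a t)
    exact ((hm.comp continuous_snd).mul hu).mul ((hcu a).comp continuous_snd)
  -- derivative identity via slope
  have hkey2 : p φ * u' a φ * w φ = ∫ t in s..φ, m t * u a t * u a t := by
    have hG : HasDerivAt (fun α => p φ * u' a φ * u α φ) (p φ * u' a φ * w φ) a :=
      (hw φ).const_mul _
    have h1 : Filter.Tendsto (slope (fun α => p φ * u' a φ * u α φ) a)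
        (nhdsWithin a {a}ᶜ) (nhds (p φ * u' a φ * w φ)) :=
      hasDerivAt_iff_tendsto_slope.1 hG
    have h2 : Filter.Tendsto (fun α => ∫ t in s..φ, m t * u α t * u a t)
        (nhdsWithin a {a}ᶜ) (nhds (∫ t in s..φ, m t * u a t * u a t)) :=
      (hH.tendsto a).mono_left nhdsWithin_le_nhds
    have heq : ∀ᶠ α in nhdsWithin a {a}ᶜ,
        slope (fun α => p φ * u' a φ * u α φ) a α = ∫ t in s..φ, m t * u α t * u a t := by
      filter_upwards [self_mem_nhdsWithin] with α (hα : α ≠ a)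
      rw [slope_def_field, key α, huφ]
      field_simp [sub_ne_zero.2 hα]
      ring
    exact tendsto_nhds_unique (h1.congr' heq) h2
  -- energy identity
  have hi1 : IntervalIntegrable (fun t => p t * (u' a t) ^ 2) MeasureTheory.volume s φ :=
    (hp.mul ((hcu' a).pow 2)).intervalIntegrable _ _
  have hi2 : IntervalIntegrable (fun t => q t * (u a t) ^ 2) MeasureTheory.volume s φ :=
    (hq.mul ((hcu a).pow 2)).intervalIntegrable _ _
  have hi3 : IntervalIntegrable (fun t => a * (m t * u a t * u a t)) MeasureTheory.volume s φ :=
    (continuous_const.mul ((hm.mul (hcu a)).mul (hcu a))).intervalIntegrable _ _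
  have henergy : a * ∫ t in s..φ, m t * u a t * u a t =
      (∫ t in s..φ, p t * (u' a t) ^ 2) + ∫ t in s..φ, q t * (u a t) ^ 2 := by
    have hV : ∀ t : ℝ, HasDerivAt (fun τ => p τ * u' a τ * u a τ)
        (p t * (u' a t) ^ 2 + q t * (u a t) ^ 2 - a * (m t * u a t * u a t)) t := by
      intro t
      have h1 := (hODEa t).2.mul (hODEa t).1
      exact h1.congr_deriv (by ring)
    have heq := intervalIntegral.integral_eq_sub_of_hasDerivAt
      (f' := fun t => p t * (u' a t) ^ 2 + q t * (u a t) ^ 2 - a * (m t * u a t * u a t))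
      (fun t _ => hV t) ((hi1.add hi2).sub hi3)
    rw [intervalIntegral.integral_sub (hi1.add hi2) hi3,
      intervalIntegral.integral_add hi1 hi2, intervalIntegral.integral_const_mul,
      huφ, huas] at heq
    simp only [mul_zero, sub_zero] at heq
    linarith
  -- positivity of ∫ p u'^2
  have hI1pos : 0 < ∫ t in s..φ, p t * (u' a t) ^ 2 := by
    have hfc : Continuous fun t => p t * (u' a t) ^ 2 := hp.mul ((hcu' a).pow 2)
    have hfs : 0 < p s * (u' a s) ^ 2 := by rw [hu'as]; positivity
    have hnb : {t | 0 < p t * (u' a t) ^ 2} ∈ nhds s :=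
      hfc.continuousAt.preimage_mem_nhds (Ioi_mem_nhds hfs)
    obtain ⟨ε, hε, hball⟩ := Metric.mem_nhds_iff.1 hnb
    set d := min (s + ε / 2) φ with hd
    have hsd : s < d := lt_min (by linarith) hsφ
    have hdφ : d ≤ φ := min_le_right _ _
    have hpos_on : ∀ x ∈ Ioo s d, 0 < p x * (u' a x) ^ 2 := by
      intro x hx
      apply hball
      rw [Metric.mem_ball, Real.dist_eq, abs_of_pos (by linarith [hx.1])]
      have : x < s + ε / 2 := lt_of_lt_of_le hx.2 (min_le_left _ _)
      linarith
    have hfi : IntervalIntegrable (fun t => p t * (u' a t) ^ 2) MeasureTheory.volume s d :=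
      hfc.intervalIntegrable _ _
    have h1 : 0 < ∫ t in s..d, p t * (u' a t) ^ 2 :=
      intervalIntegral_pos_of_pos_on hfi hpos_on hsd
    have h2 : 0 ≤ ∫ t in d..φ, p t * (u' a t) ^ 2 :=
      intervalIntegral.integral_nonneg hdφ fun x _ =>
        mul_nonneg (hppos x).le (sq_nonneg _)
    have h3 := intervalIntegral.integral_add_adjacent_intervals (μ := MeasureTheory.volume)
      (hfc.intervalIntegrable s d) (hfc.intervalIntegrable d φ)
    rw [← h3]
    linarith
  have hI2 : 0 ≤ ∫ t in s..φ, q t * (u a t) ^ 2 :=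
    intervalIntegral.integral_nonneg hsφ.le fun x _ => mul_nonneg (hqnn x) (sq_nonneg _)
  -- main identity
  have hmain : p φ * w φ * u' a φ =
      (1 / a) * (∫ t in s..φ, p t * (u' a t) ^ 2) +
      (1 / a) * ∫ t in s..φ, q t * (u a t) ^ 2 := by
    have h1 : p φ * w φ * u' a φ = ∫ t in s..φ, m t * u a t * u a t := by
      rw [← hkey2]; ring
    rw [h1]
    field_simp
    have hsq : (∫ t in s..φ, m t * u a t ^ 2) = ∫ t in s..φ, m t * u a t * u a t := by
      congr 1; ext t; ring
    rw [hsq]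
    linarith [henergy]
  refine ⟨hws, hmain, ?_, ?_⟩
  · intro hapos
    have hpos : 0 < p φ * w φ * u' a φ := by
      rw [hmain]
      have h1a : 0 < 1 / a := by positivity
      nlinarith
    by_contra hcon
    push_neg at hcon
    have h4 : 0 ≤ p φ * w φ := mul_nonneg (hppos φ).le hcon
    nlinarith
  · intro haneg
    have hneg : p φ * w φ * u' a φ < 0 := by
      rw [hmain]
      have h1a : 1 / a < 0 := by
        exact div_neg_of_pos_of_neg one_pos haneg
      nlinarith
    by_contra hcon
    push_neg at hcon
    have h4 : p φ * w φ ≤ 0 := mul_nonpos_of_nonneg_of_nonpos (hppos φ).le hcon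
    nlinarith
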